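/- Let a = {a_k} satisfy 1 = a_0 > a_1 ≥ a_2 ≥ ... ≥ 0 with a_k → 0 and ∑_{k=0}^∞ a_k = ∞. Let u be the fundamental sequence satisfying ∑_{j=0}^{k} a_j u_{k-j} = 1 for all k ≥ 0. Then lim_{k→∞} u_k = 0. -/

import Mathlib

open Finset Filter

private lemma sum_Ioc_zero_eq {f : ℕ → ℝ} (n : ℕ) :
    ∑ i ∈ Finset.Ioc 0 n, f i = ∑ i ∈ Finset.range n, f (i + 1) := by
  induction n with
  | zero => simp
  | succ n ih => rw [Finset.sum_Ioc_succ_top (Nat.zero_le _), ih, Finset.sum_range_succ]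

private lemma tele (a : ℕ → ℝ) : ∀ p q : ℕ, p ≤ q →
    ∑ i ∈ Finset.Ioc p q, (a (i - 1) - a i) = a p - a q := by
  intro p q hpq
  induction q with
  | zero => simp_all
  | succ q ih =>
    rcases Nat.lt_or_ge p (q + 1) with h | h
    · have hpq' : p ≤ q := Nat.lt_succ_iff.mp h
      rw [Finset.sum_Ioc_succ_top hpq', ih hpq']
      simp
    · have : p = q + 1 := le_antisymm hpq h
      subst this; simp

theorem stmt_4 (a u : ℕ → ℝ) (ha0 : a 0 = 1) (ha1 : a 1 < 1)
    (hapos : ∀ k, 0 ≤ a k)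
    (hamono : ∀ k, 1 ≤ k → a k ≤ a (k - 1))
    (halim : Tendsto a atTop (nhds 0))
    (hadiv : ¬ Summable a)
    (hu : ∀ k, ∑ j ∈ Finset.range (k + 1), a j * u (k - j) = 1) :
    Tendsto u atTop (nhds 0) := by
  have hu0 : u 0 = 1 := by have := hu 0; simpa [ha0] using this
  have hb : ∀ i, 1 ≤ i → 0 ≤ a (i - 1) - a i := fun i hi => sub_nonneg.2 (hamono i hi)
  -- the renewal recurrence
  have hrec : ∀ k, 1 ≤ k → u k = ∑ i ∈ Finset.Ioc 0 k, (a (i - 1) - a i) * u (k - i) := by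
    intro k hk
    obtain ⟨m, rfl⟩ : ∃ m, k = m + 1 := ⟨k - 1, (Nat.succ_pred_eq_of_pos hk).symm⟩
    have h1 := hu (m + 1)
    rw [Finset.sum_range_succ'] at h1
    have h2 := hu m
    rw [sum_Ioc_zero_eq]
    have e1 : ∀ i : ℕ, m + 1 - (i + 1) = m - i := fun i => by omega
    have e2 : ∀ i : ℕ, (i + 1) - 1 = i := fun i => by omega
    simp only [e1, e2, Nat.sub_zero, ha0, one_mul] at h1 ⊢
    have h3 : ∑ i ∈ Finset.range (m + 1), (a i - a (i + 1)) * u (m - i)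
        = (∑ i ∈ Finset.range (m + 1), a i * u (m - i))
          - ∑ i ∈ Finset.range (m + 1), a (i + 1) * u (m - i) := by
      rw [← Finset.sum_sub_distrib]; apply Finset.sum_congr rfl; intro i _; ring
    rw [h3, h2]
    linarith
  -- bounds on u
  have hbnd : ∀ k, 0 ≤ u k ∧ u k ≤ 1 := by
    intro k
    induction k using Nat.strong_induction_on with
    | _ k ih =>
      rcases Nat.eq_zero_or_pos k with rfl | hk
      · simp [hu0]
      constructor
      · rw [hrec k hk]
        apply Finset.sum_nonneg
        intro i hi
        rw [Finset.mem_Ioc] at hi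
        exact mul_nonneg (hb i hi.1) (ih (k - i) (by omega)).1
      · rw [hrec k hk]
        calc ∑ i ∈ Finset.Ioc 0 k, (a (i - 1) - a i) * u (k - i)
            ≤ ∑ i ∈ Finset.Ioc 0 k, (a (i - 1) - a i) := by
              apply Finset.sum_le_sum
              intro i hi
              rw [Finset.mem_Ioc] at hi
              have := (ih (k - i) (by omega)).2
              nlinarith [hb i hi.1]
          _ = a 0 - a k := tele a 0 k (Nat.zero_le _)
          _ ≤ 1 := by rw [ha0]; linarith [hapos k]
  have hub : IsBoundedUnder (· ≤ ·) atTop u :=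
    ⟨1, Filter.eventually_map.2 (Eventually.of_forall fun k => (hbnd k).2)⟩
  have hlb : IsBoundedUnder (· ≥ ·) atTop u :=
    ⟨0, Filter.eventually_map.2 (Eventually.of_forall fun k => (hbnd k).1)⟩
  have hcb : IsCoboundedUnder (· ≤ ·) atTop u := hlb.isCoboundedUnder_le
  set L := limsup u atTop with hLdef
  have hL0 : 0 ≤ L :=
    le_limsup_of_frequently_le (Frequently.of_forall fun k => (hbnd k).1) hub
  have hb1 : (0 : ℝ) < 1 - a 1 := by linarith
  set b1 : ℝ := 1 - a 1 with hb1def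
  -- key inductive claim
  have key : ∀ m : ℕ, ∀ ε : ℝ, 0 < ε → ∃ᶠ k in atTop, ∀ j ≤ m, L - ε < u (k - j) := by
    intro m
    induction m with
    | zero =>
      intro ε hε
      have h := frequently_lt_of_lt_limsup hcb (by linarith : L - ε < L)
      exact h.mono fun k hk j hj => by simpa [Nat.le_zero.mp hj] using hk
    | succ m ih =>
      intro ε hε
      set δ : ℝ := min ε (ε * b1 / 3) with hδdef
      have hδ : 0 < δ := lt_min hε (by positivity)
      have hδε : δ ≤ ε := min_le_left _ _
      have hδ3 : 3 * δ ≤ ε * b1 := by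
        rw [hδdef]
        have h := min_le_right ε (ε * b1 / 3); linarith
      obtain ⟨J, hJ⟩ : ∃ J, ∀ i ≥ J, a i < δ := by
        have := halim.eventually (gt_mem_nhds hδ)
        exact eventually_atTop.1 this
      obtain ⟨N, hN⟩ : ∃ N, ∀ i ≥ N, u i < L + δ :=
        eventually_atTop.1 (eventually_lt_of_limsup_lt (by linarith) hub)
      have freq := ih δ hδ
      rw [frequently_atTop] at freq ⊢
      intro K
      obtain ⟨k, hk1, hk2⟩ := freq (max K (m + J + N + 3))
      refine ⟨k, le_trans (le_max_left _ _) hk1, ?_⟩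
      have hkbig : m + J + N + 3 ≤ k := le_trans (le_max_right _ _) hk1
      intro j hj
      rcases Nat.lt_or_ge j (m + 1) with h | h
      · have : L - ε ≤ L - δ := by linarith
        exact lt_of_le_of_lt this (hk2 j (Nat.lt_succ_iff.mp h))
      · have hj' : j = m + 1 := le_antisymm hj h
        subst hj'
        set n : ℕ := k - m with hndef
        have hn : J + N + 3 ≤ n := by omega
        have hun : L - δ < u n := hk2 m (Nat.le_refl m)
        have hsplit : u n = (a 0 - a 1) * u (n - 1)
            + ∑ i ∈ Finset.Ioc 1 (J + 1), (a (i - 1) - a i) * u (n - i)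
            + ∑ i ∈ Finset.Ioc (J + 1) n, (a (i - 1) - a i) * u (n - i) := by
          rw [hrec n (by omega)]
          rw [← Finset.sum_Ioc_consecutive _ (by omega : (0:ℕ) ≤ J + 1) (by omega : J + 1 ≤ n),
            ← Finset.sum_Ioc_consecutive _ (by omega : (0:ℕ) ≤ 1) (by omega : (1:ℕ) ≤ J + 1)]
          have : Finset.Ioc 0 1 = {1} := rfl
          simp [this]
        have hS1 : ∑ i ∈ Finset.Ioc 1 (J + 1), (a (i - 1) - a i) * u (n - i)
            ≤ (1 - b1) * (L + δ) := by
          calc ∑ i ∈ Finset.Ioc 1 (J + 1), (a (i - 1) - a i) * u (n - i)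
              ≤ ∑ i ∈ Finset.Ioc 1 (J + 1), (a (i - 1) - a i) * (L + δ) := by
                apply Finset.sum_le_sum
                intro i hi
                rw [Finset.mem_Ioc] at hi
                have hNi : N ≤ n - i := by omega
                have := le_of_lt (hN (n - i) hNi)
                exact mul_le_mul_of_nonneg_left this (hb i (by omega))
            _ = (a 1 - a (J + 1)) * (L + δ) := by
                rw [← Finset.sum_mul, tele a 1 (J + 1) (by omega)]
            _ ≤ (1 - b1) * (L + δ) := by
                have : a 1 - a (J + 1) ≤ 1 - b1 := by
                  have := hapos (J + 1); rw [hb1def]; linarith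
                nlinarith
        have hS2 : ∑ i ∈ Finset.Ioc (J + 1) n, (a (i - 1) - a i) * u (n - i) ≤ δ := by
          calc ∑ i ∈ Finset.Ioc (J + 1) n, (a (i - 1) - a i) * u (n - i)
              ≤ ∑ i ∈ Finset.Ioc (J + 1) n, (a (i - 1) - a i) := by
                apply Finset.sum_le_sum
                intro i hi
                rw [Finset.mem_Ioc] at hi
                have := (hbnd (n - i)).2
                nlinarith [hb i (by omega : 1 ≤ i), (hbnd (n - i)).1]
            _ = a (J + 1) - a n := tele a (J + 1) n (by omega)
            _ ≤ δ := by
                have h1 := le_of_lt (hJ (J + 1) (by omega))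
                have := hapos n; linarith
        have hkey : b1 * u (n - 1) > b1 * L - 3 * δ := by
          have ha01 : a 0 - a 1 = b1 := by rw [ha0, hb1def]
          rw [ha01] at hsplit
          have hLδ : 0 ≤ L + δ := by linarith
          nlinarith
        have : L - ε < u (n - 1) := by
          rw [gt_iff_lt, show b1 * L - 3 * δ = b1 * (L - 3 * δ / b1) by field_simp] at hkey
          have := (mul_lt_mul_iff_right₀ hb1).1 hkey
          have h3 : 3 * δ / b1 ≤ ε := by
            rw [div_le_iff₀ hb1]; linarith
          linarith
        have : n - 1 = k - (m + 1) := by omega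
        rwa [this] at *
  -- limsup ≤ 0
  have hLle : L ≤ 0 := by
    by_contra h
    push_neg at h
    have hgrow : Tendsto (fun n : ℕ => ∑ i ∈ Finset.range n, a i) atTop atTop :=
      (not_summable_iff_tendsto_nat_atTop_of_nonneg hapos).1 hadiv
    obtain ⟨M0, hM0⟩ := eventually_atTop.1 (hgrow.eventually_ge_atTop (2 / L + 1))
    have hS : 2 / L + 1 ≤ ∑ i ∈ Finset.range (M0 + 1), a i := hM0 (M0 + 1) (Nat.le_succ _)
    obtain ⟨k, hk1, hk2⟩ := frequently_atTop.1 (key M0 (L / 2) (by linarith)) M0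
    have h1 : ∑ j ∈ Finset.range (M0 + 1), a j * u (k - j)
        ≤ ∑ j ∈ Finset.range (k + 1), a j * u (k - j) := by
      apply Finset.sum_le_sum_of_subset_of_nonneg
      · exact Finset.range_subset_range.2 (by omega)
      · intro i _ _; exact mul_nonneg (hapos i) (hbnd _).1
    have h2 : ∑ j ∈ Finset.range (M0 + 1), a j * (L / 2)
        ≤ ∑ j ∈ Finset.range (M0 + 1), a j * u (k - j) := by
      apply Finset.sum_le_sum
      intro i hi
      have := hk2 i (Nat.lt_succ_iff.mp (Finset.mem_range.1 hi))
      have : L / 2 ≤ u (k - i) := by linarith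
      exact mul_le_mul_of_nonneg_left this (hapos i)
    rw [← Finset.sum_mul] at h2
    have hfin : (2 / L + 1) * (L / 2) ≤ 1 := by
      calc (2 / L + 1) * (L / 2) ≤ (∑ i ∈ Finset.range (M0 + 1), a i) * (L / 2) := by nlinarith
        _ ≤ 1 := by rw [hu k] at h1; linarith
    have : (2 / L + 1) * (L / 2) = 1 + L / 2 := by field_simp
    rw [this] at hfin
    linarith
  -- conclude
  refine tendsto_order.2 ⟨fun c hc => Eventually.of_forall fun k => lt_of_lt_of_le hc (hbnd k).1,
    fun c hc => eventually_lt_of_limsup_lt (lt_of_le_of_lt hLle hc) hub⟩
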